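/- Let a > b > 0. For real parameters λ, μ with b < λ < a and μ < b, define the point P(λ, μ) = (Real.sqrt ((a - λ) * (a - μ) / (a - b)), Real.sqrt ((λ - b) * (b - μ) / (a - b))) in ℝ². Then for any λ₁, λ₂ ∈ (b, a) and μ₁, μ₂ < b, the Euclidean distance from P(λ₁, μ₁) to P(λ₂, μ₂) equals the Euclidean distance from P(λ₁, μ₂) to P(λ₂, μ₁). (Planar Ivory Lemma: the diagonals of a curvilinear quadrilateral made by arcs of confocal ellipses and hyperbolas are equal.) -/

import Mathlib

/-- The point of the plane with elliptic coordinates `(λ, μ)` associated with the confocal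
family `x²/(a-t) + y²/(b-t) = 1`. -/
noncomputable def ellipticPoint (a b lam mu : ℝ) : EuclideanSpace ℝ (Fin 2) :=
  (WithLp.equiv 2 (Fin 2 → ℝ)).symm
    ![Real.sqrt ((a - lam) * (a - mu) / (a - b)),
      Real.sqrt ((lam - b) * (b - mu) / (a - b))]

private lemma sq_sub_sqrt (x y : ℝ) (hx : 0 ≤ x) (hy : 0 ≤ y) :
    (Real.sqrt x - Real.sqrt y) ^ 2 = x + y - 2 * (Real.sqrt x * Real.sqrt y) := by
  rw [sub_sq, Real.sq_sqrt hx, Real.sq_sqrt hy]; ring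

/-- **Planar Ivory Lemma**: the diagonals of a curvilinear quadrilateral made by arcs of
confocal ellipses (`μ = const`) and hyperbolas (`λ = const`) are equal. -/
theorem ivory_lemma_plane (a b : ℝ) (hab : b < a) (hb : 0 < b)
    (lam₁ lam₂ mu₁ mu₂ : ℝ)
    (hlam₁ : b < lam₁ ∧ lam₁ < a) (hlam₂ : b < lam₂ ∧ lam₂ < a)
    (hmu₁ : mu₁ < b) (hmu₂ : mu₂ < b) :
    dist (ellipticPoint a b lam₁ mu₁) (ellipticPoint a b lam₂ mu₂) =
      dist (ellipticPoint a b lam₁ mu₂) (ellipticPoint a b lam₂ mu₁) := by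
  obtain ⟨h1b, h1a⟩ := hlam₁
  obtain ⟨h2b, h2a⟩ := hlam₂
  have hs : (0:ℝ) < a - b := by linarith
  have hA11 : 0 ≤ (a - lam₁) * (a - mu₁) / (a - b) :=
    div_nonneg (mul_nonneg (by linarith) (by linarith)) hs.le
  have hA22 : 0 ≤ (a - lam₂) * (a - mu₂) / (a - b) :=
    div_nonneg (mul_nonneg (by linarith) (by linarith)) hs.le
  have hA12 : 0 ≤ (a - lam₁) * (a - mu₂) / (a - b) :=
    div_nonneg (mul_nonneg (by linarith) (by linarith)) hs.le
  have hA21 : 0 ≤ (a - lam₂) * (a - mu₁) / (a - b) :=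
    div_nonneg (mul_nonneg (by linarith) (by linarith)) hs.le
  have hB11 : 0 ≤ (lam₁ - b) * (b - mu₁) / (a - b) :=
    div_nonneg (mul_nonneg (by linarith) (by linarith)) hs.le
  have hB22 : 0 ≤ (lam₂ - b) * (b - mu₂) / (a - b) :=
    div_nonneg (mul_nonneg (by linarith) (by linarith)) hs.le
  have hB12 : 0 ≤ (lam₁ - b) * (b - mu₂) / (a - b) :=
    div_nonneg (mul_nonneg (by linarith) (by linarith)) hs.le
  have hB21 : 0 ≤ (lam₂ - b) * (b - mu₁) / (a - b) :=
    div_nonneg (mul_nonneg (by linarith) (by linarith)) hs.le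
  have hx : Real.sqrt ((a - lam₁) * (a - mu₁) / (a - b)) *
      Real.sqrt ((a - lam₂) * (a - mu₂) / (a - b)) =
      Real.sqrt ((a - lam₁) * (a - mu₂) / (a - b)) *
      Real.sqrt ((a - lam₂) * (a - mu₁) / (a - b)) := by
    rw [← Real.sqrt_mul hA11, ← Real.sqrt_mul hA12]; congr 1; ring
  have hy : Real.sqrt ((lam₁ - b) * (b - mu₁) / (a - b)) *
      Real.sqrt ((lam₂ - b) * (b - mu₂) / (a - b)) =
      Real.sqrt ((lam₁ - b) * (b - mu₂) / (a - b)) *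
      Real.sqrt ((lam₂ - b) * (b - mu₁) / (a - b)) := by
    rw [← Real.sqrt_mul hB11, ← Real.sqrt_mul hB12]; congr 1; ring
  have hsum : (a - lam₁) * (a - mu₁) / (a - b) + (lam₁ - b) * (b - mu₁) / (a - b) +
      ((a - lam₂) * (a - mu₂) / (a - b) + (lam₂ - b) * (b - mu₂) / (a - b)) =
      (a - lam₁) * (a - mu₂) / (a - b) + (lam₁ - b) * (b - mu₂) / (a - b) +
      ((a - lam₂) * (a - mu₁) / (a - b) + (lam₂ - b) * (b - mu₁) / (a - b)) := by
    field_simp; ring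
  rw [EuclideanSpace.dist_eq, EuclideanSpace.dist_eq]
  congr 1
  simp only [ellipticPoint, WithLp.equiv_symm_apply, PiLp.toLp_apply, Fin.sum_univ_two,
    Matrix.cons_val_zero, Matrix.cons_val_one, Matrix.head_cons, Real.dist_eq, sq_abs]
  rw [sq_sub_sqrt _ _ hA11 hA22, sq_sub_sqrt _ _ hB11 hB22,
    sq_sub_sqrt _ _ hA12 hA21, sq_sub_sqrt _ _ hB12 hB21]
  linarith [hx, hy, hsum]
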